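/- arXiv:1206.0382 — 4 statements merged into one kernel-verified Lean document; each statement's English description precedes it below -/
import Mathlib

section
/- Assume T is disk-like. Let ℓ, ℓ' ∈ ℤ² \ {0} with T ∩ (T + ℓ) ≠ ∅ and T ∩ (T + ℓ') ≠ ∅, and suppose ℓ' = Aℓ − b_1 v for some b_1 ∈ ΔD. Then for every j ∈ I_{b_1}, one has A^{−1}(T_{ℓ'} + jv) ⊆ T_ℓ, where T_m = T ∩ (T + m) and I_{b_1} = {b_1, b_1+1, …, |q|−1} if b_1 ≥ 0 and I_{b_1} = {0, 1, …, |q|−1+b_1} if b_1 < 0. -/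
noncomputable section

open Matrix Topology Set Pointwise Polynomial

/-- The plane `ℝ²` with the Euclidean metric. -/
abbrev E2 : Type := EuclideanSpace ℝ (Fin 2)

/-- View a plain vector `Fin 2 → ℝ` as a point of the Euclidean plane. -/
def toE (x : Fin 2 → ℝ) : E2 := WithLp.toLp 2 x

/-- The real matrix obtained from an integer matrix. -/
def matR (A : Matrix (Fin 2) (Fin 2) ℤ) : Matrix (Fin 2) (Fin 2) ℝ := A.map Int.cast

/-- View an integer vector as a point of the Euclidean plane. -/
def vecE (w : Fin 2 → ℤ) : E2 := toE fun i => (w i : ℝ)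

/-- All complex eigenvalues of `A` have modulus greater than 1. -/
def Expanding (A : Matrix (Fin 2) (Fin 2) ℤ) : Prop :=
  ∀ z : ℂ, ((A.charpoly).map (Int.castRingHom ℂ)).IsRoot z → 1 < ‖z‖

/-- `a` is a digit in `D = {0, 1, …, |q|-1}`. -/
def IsDigit (q a : ℤ) : Prop := 0 ≤ a ∧ a < |q|

/-- `b` belongs to the difference digit set `ΔD = D - D = {-(|q|-1), …, |q|-1}`. -/
def IsDiffDigit (q b : ℤ) : Prop := |b| ≤ |q| - 1

/-- `x = ∑_{i≥1} A^{-i} (c_{i-1} v)` (note the `0`-based indexing of `c`). -/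
def SumsTo (A : Matrix (Fin 2) (Fin 2) ℤ) (v : Fin 2 → ℤ) (c : ℕ → ℤ) (x : E2) : Prop :=
  HasSum (fun i : ℕ => toE (((matR A)⁻¹ ^ (i + 1)).mulVec ((c i : ℝ) • fun j => (v j : ℝ)))) x

/-- The self-affine tile `T = T(A, Dv)` with the consecutive collinear digit set `Dv`. -/
def Tile (A : Matrix (Fin 2) (Fin 2) ℤ) (q : ℤ) (v : Fin 2 → ℤ) : Set E2 :=
  {x | ∃ a : ℕ → ℤ, (∀ i, IsDigit q (a i)) ∧ SumsTo A v a x}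

/-- `T` is homeomorphic to the closed unit disk in `ℝ²`. -/
def DiskLike (T : Set E2) : Prop :=
  Nonempty (T ≃ₜ (Metric.closedBall (0 : E2) 1 : Set E2))

/-- `{v, Av}` is a `ℤ`-basis of `ℤ²` (primitivity of the digit set). -/
def IsZBasis (A : Matrix (Fin 2) (Fin 2) ℤ) (v : Fin 2 → ℤ) : Prop :=
  Submodule.span ℤ ({v, A.mulVec v} : Set (Fin 2 → ℤ)) = ⊤ ∧
    LinearIndependent ℤ ![v, A.mulVec v]

/-- `j ∈ I_b`, where `I_b = {b, …, |q|-1}` if `b ≥ 0` and `I_b = {0, …, |q|-1+b}` if `b < 0`. -/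
def MemI (q b j : ℤ) : Prop :=
  (0 ≤ b ∧ b ≤ j ∧ j ≤ |q| - 1) ∨ (b < 0 ∧ 0 ≤ j ∧ j ≤ |q| - 1 + b)


-- Auxiliary lemmas ------------------------------------------------------

lemma mem_tile_step (A : Matrix (Fin 2) (Fin 2) ℤ) (q : ℤ) (v : Fin 2 → ℤ)
    (a : ℤ) (ha : IsDigit q a) (y : Fin 2 → ℝ) (hy : toE y ∈ Tile A q v) :
    toE ((matR A)⁻¹.mulVec ((a : ℝ) • (fun j => (v j : ℝ)) + y)) ∈ Tile A q v := by
  obtain ⟨c, hc, hsum⟩ := hy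
  set M := (matR A)⁻¹ with hM
  set vR : Fin 2 → ℝ := fun j => (v j : ℝ) with hvR
  refine ⟨fun n => Nat.casesOn n a c, fun n => by cases n with
    | zero => exact ha
    | succ n => exact hc n, ?_⟩
  have hL : HasSum (fun i : ℕ => M.mulVec ((M ^ (i+1)).mulVec ((c i : ℝ) • vR))) (M.mulVec y) := by
    exact (LinearMap.toContinuousLinearMap (Matrix.mulVecLin M)).hasSum
      (show HasSum (fun i : ℕ => ((M ^ (i+1)).mulVec ((c i : ℝ) • vR) : Fin 2 → ℝ)) y from
        (PiLp.continuousLinearEquiv 2 ℝ (fun _ : Fin 2 => ℝ)).toContinuousLinearMap.hasSum hsum)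
  have h2 : HasSum (fun i : ℕ => (M ^ (i+1+1)).mulVec ((c i : ℝ) • vR)) (M.mulVec y) := by
    simpa only [Matrix.mulVec_mulVec, ← pow_succ'] using hL
  have h3 := (hasSum_nat_add_iff
    (f := fun i : ℕ => (M ^ (i+1)).mulVec (((Nat.casesOn i a c : ℤ) : ℝ) • vR)) 1).mp h2
  have heq : M.mulVec ((a : ℝ) • vR + y)
      = M.mulVec y + ∑ i ∈ Finset.range 1,
          (M ^ (i+1)).mulVec (((Nat.casesOn i a c : ℤ) : ℝ) • vR) := by
    simp [Matrix.mulVec_add, add_comm, pow_one]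
  show HasSum (fun i : ℕ => toE ((M ^ (i+1)).mulVec (((Nat.casesOn i a c : ℤ) : ℝ) • vR) : Fin 2 → ℝ))
    (toE (M.mulVec ((a : ℝ) • vR + y)))
  rw [heq]
  exact (PiLp.continuousLinearEquiv 2 ℝ (fun _ : Fin 2 => ℝ)).symm.toContinuousLinearMap.hasSum h3

lemma det_matR_eq (A : Matrix (Fin 2) (Fin 2) ℤ) (p q : ℤ)
    (hchar : A.charpoly = X ^ 2 + C p * X + C q) : (matR A).det = (q : ℝ) := by
  have h := Matrix.det_eq_sign_charpoly_coeff A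
  rw [hchar] at h
  simp at h
  have : (matR A).det = ((A.det : ℤ) : ℝ) := ((Int.castRingHom ℝ).map_det A).symm
  rw [this, h]

lemma cast_mulVec (A : Matrix (Fin 2) (Fin 2) ℤ) (w : Fin 2 → ℤ) :
    (fun i => ((A.mulVec w) i : ℝ)) = (matR A).mulVec (fun i => (w i : ℝ)) := by
  funext i
  simp [Matrix.mulVec, dotProduct, matR, Matrix.map_apply]

/-- first half of Proposition 3.1. If `ℓ, ℓ'` are neighbor translates
with `ℓ' = Aℓ - b₁v`, `b₁ ∈ ΔD`, then `A⁻¹(T_{ℓ'} + jv) ⊆ T_ℓ` for all `j ∈ I_{b₁}`,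
where `T_m = T ∩ (T + m)`. -/
theorem piece_inclusion
    (A : Matrix (Fin 2) (Fin 2) ℤ) (p q : ℤ) (v : Fin 2 → ℤ)
    (hq : 2 ≤ |q|)
    (hchar : A.charpoly = X ^ 2 + C p * X + C q)
    (hexp : Expanding A)
    (hbasis : IsZBasis A v)
    (hdisk : DiskLike (Tile A q v))
    (ℓ ℓ' : Fin 2 → ℤ) (hℓ : ℓ ≠ 0) (hℓ' : ℓ' ≠ 0)
    (hnb : (Tile A q v ∩ (vecE ℓ +ᵥ Tile A q v)).Nonempty)
    (hnb' : (Tile A q v ∩ (vecE ℓ' +ᵥ Tile A q v)).Nonempty)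
    (b₁ : ℤ) (hb₁ : IsDiffDigit q b₁)
    (hrel : ℓ' = A.mulVec ℓ - b₁ • v) :
    ∀ j : ℤ, MemI q b₁ j →
      (fun x : E2 => toE ((matR A)⁻¹.mulVec x)) ''
          (((j : ℝ) • vecE v) +ᵥ (Tile A q v ∩ (vecE ℓ' +ᵥ Tile A q v))) ⊆
        Tile A q v ∩ (vecE ℓ +ᵥ Tile A q v) := by
  intro j hj
  set M := (matR A)⁻¹ with hM
  set vR : Fin 2 → ℝ := fun i => (v i : ℝ) with hvR
  set ℓR : Fin 2 → ℝ := fun i => (ℓ i : ℝ) with hℓR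
  set ℓ'R : Fin 2 → ℝ := fun i => (ℓ' i : ℝ) with hℓ'Rdef
  have hdet : IsUnit (matR A).det := by
    rw [det_matR_eq A p q hchar, isUnit_iff_ne_zero]
    intro h
    have : q = 0 := by exact_mod_cast h
    rw [this] at hq; simp at hq
  have hinv : ∀ u : Fin 2 → ℝ, M.mulVec ((matR A).mulVec u) = u := by
    intro u
    rw [hM, Matrix.mulVec_mulVec, Matrix.nonsing_inv_mul _ hdet, Matrix.one_mulVec]
  have habs := abs_le.mp hb₁
  have hjD : IsDigit q j := by
    rcases hj with ⟨h1, h2, h3⟩ | ⟨h1, h2, h3⟩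
    · exact ⟨le_trans h1 h2, by linarith⟩
    · exact ⟨h2, by linarith⟩
  have hjbD : IsDigit q (j - b₁) := by
    rcases hj with ⟨h1, h2, h3⟩ | ⟨h1, h2, h3⟩
    · exact ⟨by linarith, by linarith⟩
    · exact ⟨by linarith, by linarith⟩
  have hℓ'cast : ℓ'R = (matR A).mulVec ℓR - (b₁ : ℝ) • vR := by
    rw [hℓ'Rdef, hrel]
    funext i
    rw [← cast_mulVec A ℓ]
    simp [hvR]
  rintro x ⟨y, ⟨w, ⟨hwT, hwT'⟩, rfl⟩, rfl⟩
  rw [Set.mem_vadd_set_iff_neg_vadd_mem] at hwT'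
  constructor
  · exact mem_tile_step A q v j hjD w.ofLp (by exact hwT)
  · rw [Set.mem_vadd_set_iff_neg_vadd_mem]
    have key : (-ℓR + M.mulVec ((j : ℝ) • vR + w.ofLp) : Fin 2 → ℝ)
        = M.mulVec (((j - b₁ : ℤ) : ℝ) • vR + (-ℓ'R + w.ofLp)) := by
      have harg : (((j - b₁ : ℤ) : ℝ) • vR + (-ℓ'R + w.ofLp) : Fin 2 → ℝ)
          = ((j : ℝ) • vR + w.ofLp) - (matR A).mulVec ℓR := by
        rw [hℓ'cast]
        push_cast
        module
      rw [harg, Matrix.mulVec_sub, hinv ℓR]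
      abel
    have hmem := mem_tile_step A q v (j - b₁) hjbD (-ℓ'R + w.ofLp) (by exact hwT')
    show toE (-ℓR + M.mulVec ((j : ℝ) • vR + w.ofLp)) ∈ Tile A q v
    rw [show toE (-ℓR + M.mulVec ((j : ℝ) • vR + w.ofLp))
        = toE (M.mulVec (((j - b₁ : ℤ) : ℝ) • vR + (-ℓ'R + w.ofLp)))
      from congrArg toE key]
    exact hmem
end
end

section
/- Assume T is disk-like. Let ℓ ∈ ℤ² \ {0} with T ∩ (T + ℓ) ≠ ∅, and let B_ℓ = {ℓ'' ∈ ℤ² \ {0} : T ∩ (T + ℓ'') ≠ ∅ and ℓ'' = Aℓ − bv for some b ∈ ΔD}. Then T_ℓ = ⋃_{ℓ'' ∈ B_ℓ} ⋃_{j ∈ I_b} A^{−1}(T_{ℓ''} + jv), where for each ℓ'' ∈ B_ℓ the integer b ∈ ΔD is the (unique) one with ℓ'' = Aℓ − bv, T_m = T ∩ (T + m), and I_b = {b, b+1, …, |q|−1} if b ≥ 0 and I_b = {0, 1, …, |q|−1+b} if b < 0. Hence the boundary ∂T = ⋃_{ℓ} T_ℓ is a graph-directed set. -/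
noncomputable section

open Matrix Topology Set Pointwise Polynomial

def mulE (M : Matrix (Fin 2) (Fin 2) ℝ) : E2 →L[ℝ] E2 :=
  LinearMap.toContinuousLinearMap
    ((WithLp.linearEquiv 2 ℝ (Fin 2 → ℝ)).symm.toLinearMap ∘ₗ M.mulVecLin ∘ₗ
      (WithLp.linearEquiv 2 ℝ (Fin 2 → ℝ)).toLinearMap)

lemma mulE_apply (M : Matrix (Fin 2) (Fin 2) ℝ) (x : E2) : mulE M x = toE (M.mulVec x) := rfl

-- determinant of A is q
lemma det_eq (A : Matrix (Fin 2) (Fin 2) ℤ) (p q : ℤ)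
    (hchar : A.charpoly = X ^ 2 + C p * X + C q) : A.det = q := by
  have h0 : A.charpoly.coeff 0 = q := by
    rw [hchar]; simp [coeff_X_pow]
  rw [Matrix.det_eq_sign_charpoly_coeff, h0]
  simp

lemma detR_unit (A : Matrix (Fin 2) (Fin 2) ℤ) (p q : ℤ) (hq : 2 ≤ |q|)
    (hchar : A.charpoly = X ^ 2 + C p * X + C q) : IsUnit (matR A).det := by
  have hm : matR A = (Int.castRingHom ℝ).mapMatrix A := rfl
  rw [hm, ← RingHom.map_det, det_eq A p q hchar]
  refine isUnit_iff_ne_zero.2 ?_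
  have hq0 : q ≠ 0 := by rintro rfl; simp at hq
  simpa using hq0

-- Cayley-Hamilton as vector identity
lemma CH_vec (A : Matrix (Fin 2) (Fin 2) ℤ) (p q : ℤ)
    (hchar : A.charpoly = X ^ 2 + C p * X + C q) (w : Fin 2 → ℤ) :
    A.mulVec (A.mulVec w) + p • A.mulVec w + q • w = 0 := by
  have h := Matrix.aeval_self_charpoly A
  rw [hchar] at h
  have h2 : A ^ 2 + p • (1 : Matrix (Fin 2) (Fin 2) ℤ) * A + q • 1 = 0 := by
    simpa [Algebra.algebraMap_eq_smul_one] using h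
  have h3 := congrArg (fun M : Matrix (Fin 2) (Fin 2) ℤ => M.mulVec w) h2
  simpa [Matrix.add_mulVec, Matrix.smul_mulVec, pow_two, ← Matrix.mulVec_mulVec,
    Matrix.zero_mulVec, Matrix.one_mulVec] using h3

lemma ellpp_ne (A : Matrix (Fin 2) (Fin 2) ℤ) (p q : ℤ) (v : Fin 2 → ℤ) (hq : 2 ≤ |q|)
    (hchar : A.charpoly = X ^ 2 + C p * X + C q)
    (hspan : Submodule.span ℤ ({v, A.mulVec v} : Set (Fin 2 → ℤ)) = ⊤)
    (hli : LinearIndependent ℤ ![v, A.mulVec v])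
    (ℓ : Fin 2 → ℤ) (hℓ : ℓ ≠ 0) (b : ℤ) (hb : |b| ≤ |q| - 1) :
    A.mulVec ℓ - b • v ≠ 0 := by
  intro h0
  have hAl : A.mulVec ℓ = b • v := by
    have := sub_eq_zero.1 h0; exact this
  obtain ⟨s, t, hst⟩ : ∃ s t : ℤ, s • v + t • A.mulVec v = ℓ := by
    have : ℓ ∈ Submodule.span ℤ ({v, A.mulVec v} : Set (Fin 2 → ℤ)) := by
      rw [hspan]; trivial
    exact Submodule.mem_span_pair.1 this
  have hCH := CH_vec A p q hchar ℓ
  rw [hAl, Matrix.mulVec_smul] at hCH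
  -- b • A.mulVec v + p • (b • v) + q • ℓ = 0
  rw [← hst] at hCH
  have key : (p * b + q * s) • v + (b + q * t) • A.mulVec v = 0 := by
    rw [add_smul, add_smul, mul_smul, mul_smul, mul_smul,
      ← hCH]
    module
  obtain ⟨h1, h2⟩ := LinearIndependent.pair_iff.1 hli _ _ key
  have hb0 : b = 0 := by
    have hdvd : q ∣ b := ⟨-t, by linarith⟩
    have hlt : |b| < |q| := by linarith
    exact Int.eq_zero_of_abs_lt_dvd ((abs_dvd q b).2 hdvd) hlt
  have hq0 : q ≠ 0 := by rintro rfl; simp at hq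
  have hs0 : s = 0 := by
    have hqs : q * s = 0 := by rw [hb0] at h1; linarith
    exact (mul_eq_zero.1 hqs).resolve_left hq0
  have ht0 : t = 0 := by
    have hqt : q * t = 0 := by rw [hb0] at h2; linarith
    exact (mul_eq_zero.1 hqt).resolve_left hq0
  apply hℓ
  rw [← hst, hs0, ht0]; simp

lemma shift_down (A : Matrix (Fin 2) (Fin 2) ℤ) (q : ℤ) (v : Fin 2 → ℤ)
    (hu : IsUnit (matR A).det) {a : ℕ → ℤ} {x : E2} (h : SumsTo A v a x) :
    SumsTo A v (fun i => a (i + 1))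
      (mulE (matR A) x - toE ((a 0 : ℝ) • fun j => (v j : ℝ))) := by
  set M := matR A with hM
  set N := M⁻¹ with hN
  set vR : Fin 2 → ℝ := fun j => (v j : ℝ) with hvR
  set g : ℕ → E2 := fun i => toE ((N ^ i).mulVec ((a i : ℝ) • vR)) with hg
  have hMN : M * N = 1 := Matrix.mul_nonsing_inv M hu
  have h1 : HasSum g (mulE M x) := by
    have h0 := h.mapL (mulE M)
    convert h0 using 2 with i
    rw [hg, mulE_apply]
    show toE ((N ^ i).mulVec ((a i : ℝ) • vR)) = toE (M.mulVec ((N ^ (i+1)).mulVec ((a i : ℝ) • vR)))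
    rw [Matrix.mulVec_mulVec, pow_succ', ← mul_assoc, hMN, one_mul]
  have h2 : HasSum (fun n => g (n + 1)) (mulE M x - g 0) := by
    refine (hasSum_nat_add_iff 1).2 ?_
    simpa using h1
  have hg0 : g 0 = toE ((a 0 : ℝ) • vR) := by
    rw [hg]; simp [Matrix.one_mulVec]
  rw [hg0] at h2
  exact h2

lemma shift_up (A : Matrix (Fin 2) (Fin 2) ℤ) (q : ℤ) (v : Fin 2 → ℤ)
    {a : ℕ → ℤ} {y : E2} (h : SumsTo A v a y) (j : ℤ) :
    SumsTo A v (fun i => Nat.casesOn i j a)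
      (mulE (matR A)⁻¹ (y + toE ((j : ℝ) • fun k => (v k : ℝ)))) := by
  set M := matR A with hM
  set N := M⁻¹ with hN
  set vR : Fin 2 → ℝ := fun k => (v k : ℝ) with hvR
  set c : ℕ → ℤ := fun i => Nat.casesOn i j a with hc
  set g : ℕ → E2 := fun i => toE ((N ^ (i + 1)).mulVec ((c i : ℝ) • vR)) with hg
  have h2 : HasSum (fun n => g (n + 1)) (mulE N y) := by
    have h0 := h.mapL (mulE N)
    convert h0 using 2 with i
    rw [hg, mulE_apply]
    show toE ((N ^ (i + 2)).mulVec ((a i : ℝ) • vR)) = toE (N.mulVec ((N ^ (i+1)).mulVec ((a i : ℝ) • vR)))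
    rw [Matrix.mulVec_mulVec, ← pow_succ']
  have h3 : HasSum g (mulE N y + g 0) := by
    have := (hasSum_nat_add_iff (f := g) 1).1 h2
    simpa using this
  have hg0 : g 0 = mulE N (toE ((j : ℝ) • vR)) := by
    rw [hg, mulE_apply]
    show toE (N ^ (0 + 1) *ᵥ (j : ℝ) • vR) = toE (N *ᵥ ((j : ℝ) • vR))
    rw [zero_add, pow_one]
  rw [hg0, ← map_add] at h3
  exact h3

lemma mulE_cancel_left (M : Matrix (Fin 2) (Fin 2) ℝ) (hu : IsUnit M.det) (x : E2) :
    mulE M⁻¹ (mulE M x) = x := by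
  rw [mulE_apply, mulE_apply]
  show toE (M⁻¹ *ᵥ (M *ᵥ x)) = x
  rw [Matrix.mulVec_mulVec, Matrix.nonsing_inv_mul M hu, Matrix.one_mulVec]
  rfl

lemma vecE_mulVec (A : Matrix (Fin 2) (Fin 2) ℤ) (w : Fin 2 → ℤ) :
    vecE (A.mulVec w) = mulE (matR A) (vecE w) := by
  rw [mulE_apply]
  show toE _ = toE _
  congr 1
  funext i
  show ((A.mulVec w) i : ℝ) = ((matR A).mulVec (fun k => (w k : ℝ))) i
  simp [Matrix.mulVec, dotProduct, matR, Matrix.map_apply]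

lemma vecE_sub (w u : Fin 2 → ℤ) : vecE (w - u) = vecE w - vecE u := by
  show toE _ = toE ((fun i => ((w i : ℝ))) - fun i => ((u i : ℝ)))
  exact congrArg toE (funext fun i => by
    show (((w - u) i : ℤ) : ℝ) = (w i : ℝ) - (u i : ℝ)
    push_cast [Pi.sub_apply]; ring)

lemma vecE_zsmul (b : ℤ) (v : Fin 2 → ℤ) :
    vecE (b • v) = toE ((b : ℝ) • fun k => (v k : ℝ)) := by
  exact congrArg toE (funext fun i => by
    show (((b • v) i : ℤ) : ℝ) = (b : ℝ) * (v i : ℝ)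
    rw [Pi.smul_apply, smul_eq_mul]; push_cast; ring)

lemma smul_vecE (j : ℤ) (v : Fin 2 → ℤ) :
    (j : ℝ) • vecE v = toE ((j : ℝ) • fun k => (v k : ℝ)) := rfl

lemma diff_digit_of (q j j' : ℤ) (hj : IsDigit q j) (hj' : IsDigit q j') :
    IsDiffDigit q (j - j') := by
  obtain ⟨h1, h2⟩ := hj; obtain ⟨h3, h4⟩ := hj'
  show |j - j'| ≤ |q| - 1
  rw [abs_le]; constructor <;> linarith

lemma memI_of (q j j' : ℤ) (hj : IsDigit q j) (hj' : IsDigit q j') : MemI q (j - j') j := by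
  obtain ⟨h1, h2⟩ := hj; obtain ⟨h3, h4⟩ := hj'
  rcases le_or_gt j' j with h | h
  · exact Or.inl ⟨by linarith, by linarith, by linarith⟩
  · exact Or.inr ⟨by linarith, h1, by linarith⟩

lemma digit_of_memI (q b j : ℤ) (hb : IsDiffDigit q b) (hj : MemI q b j) :
    IsDigit q j ∧ IsDigit q (j - b) := by
  have hb' := abs_le.1 hb
  obtain ⟨hb1, hb2⟩ := hb'
  rcases hj with ⟨h1, h2, h3⟩ | ⟨h1, h2, h3⟩ <;>
    exact ⟨⟨by linarith, by linarith⟩, ⟨by linarith, by linarith⟩⟩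
noncomputable section

/-- Proposition 3.1. For a neighbor translate `ℓ`,
`T_ℓ = ⋃_{ℓ'' ∈ B_ℓ} ⋃_{j ∈ I_b} A⁻¹(T_{ℓ''} + jv)`, where `B_ℓ` consists of the
neighbor translates `ℓ'' = Aℓ - bv` with `b ∈ ΔD`, and `T_m = T ∩ (T + m)`; hence the
boundary `∂T = ⋃_ℓ T_ℓ` is a graph-directed set. -/
theorem piece_decomposition
    (A : Matrix (Fin 2) (Fin 2) ℤ) (p q : ℤ) (v : Fin 2 → ℤ)
    (hq : 2 ≤ |q|)
    (hchar : A.charpoly = X ^ 2 + C p * X + C q)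
    (hexp : Expanding A)
    (hbasis : IsZBasis A v)
    (hdisk : DiskLike (Tile A q v))
    (ℓ : Fin 2 → ℤ) (hℓ : ℓ ≠ 0)
    (hnb : (Tile A q v ∩ (vecE ℓ +ᵥ Tile A q v)).Nonempty) :
    Tile A q v ∩ (vecE ℓ +ᵥ Tile A q v) =
      ⋃ (ℓ'' : Fin 2 → ℤ) (_ : ℓ'' ≠ 0)
        (_ : (Tile A q v ∩ (vecE ℓ'' +ᵥ Tile A q v)).Nonempty)
        (b : ℤ) (_ : IsDiffDigit q b) (_ : ℓ'' = A.mulVec ℓ - b • v)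
        (j : ℤ) (_ : MemI q b j),
        (fun x : E2 => toE ((matR A)⁻¹.mulVec x)) ''
          (((j : ℝ) • vecE v) +ᵥ (Tile A q v ∩ (vecE ℓ'' +ᵥ Tile A q v))) := by
  obtain ⟨hspan, hli⟩ := hbasis
  have hu : IsUnit (matR A).det := detR_unit A p q hq hchar
  set M := matR A with hM
  set N := M⁻¹ with hN
  set vR : Fin 2 → ℝ := fun k => (v k : ℝ) with hvR
  set T := Tile A q v with hT
  ext x
  simp only [Set.mem_iUnion, Set.mem_image]
  constructor
  · rintro ⟨hxT, hxl⟩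
    obtain ⟨x', hx'T, hx'⟩ := Set.mem_vadd_set.1 hxl
    rw [vadd_eq_add] at hx'
    obtain ⟨a, ha, hsa⟩ := hxT
    obtain ⟨a', ha', hsa'⟩ := hx'T
    set b : ℤ := a 0 - a' 0 with hb
    set y : E2 := mulE M x - toE ((a 0 : ℝ) • vR) with hy
    set z : E2 := mulE M x' - toE ((a' 0 : ℝ) • vR) with hz
    have hyT : y ∈ T := ⟨fun i => a (i + 1), fun i => ha (i + 1), shift_down A q v hu hsa⟩
    have hzT : z ∈ T := ⟨fun i => a' (i + 1), fun i => ha' (i + 1), shift_down A q v hu hsa'⟩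
    have hkey : y = vecE (A.mulVec ℓ - b • v) + z := by
      rw [vecE_sub, vecE_mulVec, vecE_zsmul, hy, hz, ← hx', map_add]
      have hcast : toE ((a 0 : ℝ) • vR) = toE ((b : ℝ) • vR) + toE ((a' 0 : ℝ) • vR) := by
        show toE _ = toE ((b : ℝ) • vR + (a' 0 : ℝ) • vR)
        refine congrArg toE ?_
        rw [← add_smul]
        congr 1
        rw [hb]; push_cast; ring
      rw [hcast]
      abel
    have hyl : y ∈ vecE (A.mulVec ℓ - b • v) +ᵥ T :=
      Set.mem_vadd_set.2 ⟨z, hzT, by rw [vadd_eq_add, ← hkey]⟩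
    refine ⟨A.mulVec ℓ - b • v,
      ellpp_ne A p q v hq hchar hspan hli ℓ hℓ b (diff_digit_of q (a 0) (a' 0) (ha 0) (ha' 0)),
      ⟨y, hyT, hyl⟩, b, diff_digit_of q (a 0) (a' 0) (ha 0) (ha' 0), rfl, a 0,
      memI_of q (a 0) (a' 0) (ha 0) (ha' 0), mulE M x, ?_, ?_⟩
    · refine Set.mem_vadd_set.2 ⟨y, ⟨hyT, hyl⟩, ?_⟩
      rw [vadd_eq_add, smul_vecE, hy]
      abel
    · show toE (N.mulVec (mulE M x)) = x
      rw [← mulE_apply]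
      exact mulE_cancel_left M hu x
  · rintro ⟨ℓ'', hne, hnon, b, hdb, rfl, j, hj, z, hz, hzx⟩
    obtain ⟨⟨hjdig, hjbdig⟩⟩ := And.intro (digit_of_memI q b j hdb hj) trivial
    obtain ⟨w, ⟨hwT, hwl⟩, hwz⟩ := Set.mem_vadd_set.1 hz
    rw [vadd_eq_add] at hwz
    obtain ⟨w', hw'T, hw'⟩ := Set.mem_vadd_set.1 hwl
    rw [vadd_eq_add] at hw'
    obtain ⟨a, ha, hsa⟩ := hwT
    obtain ⟨a', ha', hsa'⟩ := hw'T
    have hxz : x = mulE N z := by rw [← hzx]; rfl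
    have hxval : x = mulE N (w + toE ((j : ℝ) • vR)) := by
      rw [hxz, ← hwz, smul_vecE]
      congr 1
      abel
    have hxT : x ∈ T := by
      refine ⟨fun i => Nat.casesOn i j a, fun i => ?_, ?_⟩
      · cases i with
        | zero => exact hjdig
        | succ k => exact ha k
      · rw [hxval]
        exact shift_up A q v hsa j
    have hu' : x - vecE ℓ = mulE N (w' + toE (((j - b : ℤ) : ℝ) • vR)) := by
      have hl'' : vecE (A.mulVec ℓ - b • v) = mulE M (vecE ℓ) - toE ((b : ℝ) • vR) := by
        rw [vecE_sub, vecE_mulVec, vecE_zsmul]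
      have hsplit : toE (((j - b : ℤ) : ℝ) • vR) = toE ((j : ℝ) • vR) - toE ((b : ℝ) • vR) := by
        show toE _ = toE ((j : ℝ) • vR - (b : ℝ) • vR)
        refine congrArg toE ?_
        rw [← sub_smul]
        congr 1
        push_cast; ring
      rw [hsplit, hxval, ← hw', hl'']
      rw [map_add, map_add, map_sub, map_add, map_sub]
      have hcanc : mulE N (mulE M (vecE ℓ)) = vecE ℓ := mulE_cancel_left M hu _
      rw [hcanc]
      abel
    have hxl : x ∈ vecE ℓ +ᵥ T := by
      refine Set.mem_vadd_set.2 ⟨x - vecE ℓ, ?_, by rw [vadd_eq_add]; abel⟩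
      rw [hu']
      refine ⟨fun i => Nat.casesOn i (j - b) a', fun i => ?_, ?_⟩
      · cases i with
        | zero => exact hjbdig
        | succ k => exact ha' k
      · exact shift_up A q v hsa' (j - b)
    exact ⟨hxT, hxl⟩
end
end
end

section
/- Assume T + ℤ² = ℝ² and distinct translates T + m (m ∈ ℤ²) have pairwise disjoint interiors. Then A·(T°) ⊇ ⋃_{j=0}^{|q|−1} (T° + jv), and the sets T° + jv for j = 0, 1, …, |q|−1 are pairwise disjoint, where T° denotes the interior of T. -/
noncomputable section

open Matrix Topology Set Pointwise Polynomial

lemma detR_ne_zero (A : Matrix (Fin 2) (Fin 2) ℤ) (p q : ℤ) (hq : 2 ≤ |q|)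
    (hchar : A.charpoly = X ^ 2 + C p * X + C q) : (matR A).det ≠ 0 := by
  have h1 : A.det = q := by
    have h := Matrix.det_eq_sign_charpoly_coeff A
    rw [hchar] at h; simpa using h
  have h2 : (matR A).det = ((A.det : ℤ) : ℝ) := (RingHom.map_det (Int.castRingHom ℝ) A).symm
  rw [h2, h1]
  have : q ≠ 0 := by rintro rfl; simp at hq
  exact_mod_cast this

/-- The invertible real matrix `A` as a linear equivalence of the Euclidean plane. -/
def eqvA (A : Matrix (Fin 2) (Fin 2) ℤ) (h : (matR A).det ≠ 0) : E2 ≃ₗ[ℝ] E2 :=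
  LinearEquiv.ofLinear (Matrix.toEuclideanLin (matR A)) (Matrix.toEuclideanLin (matR A)⁻¹)
    (by
      apply LinearMap.ext; intro x
      suffices hh : toE ((matR A).mulVec ((matR A)⁻¹.mulVec x)) = x by exact hh
      rw [Matrix.mulVec_mulVec, Matrix.mul_nonsing_inv _ (isUnit_iff_ne_zero.mpr h),
        Matrix.one_mulVec]
      rfl)
    (by
      apply LinearMap.ext; intro x
      suffices hh : toE ((matR A)⁻¹.mulVec ((matR A).mulVec x)) = x by exact hh
      rw [Matrix.mulVec_mulVec, Matrix.nonsing_inv_mul _ (isUnit_iff_ne_zero.mpr h),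
        Matrix.one_mulVec]
      rfl)

/-- The tile set equation inclusion: `T + jv ⊆ A·T` for every digit `j`. -/
lemma tile_vadd_subset (A : Matrix (Fin 2) (Fin 2) ℤ) (q : ℤ) (v : Fin 2 → ℤ)
    (h : (matR A).det ≠ 0) (j : ℤ) (hj : IsDigit q j) :
    (((j : ℝ) • vecE v) +ᵥ Tile A q v) ⊆
      ⇑(eqvA A h).toContinuousLinearEquiv.toHomeomorph '' Tile A q v := by
  intro x hx
  rw [Set.mem_vadd_set] at hx
  obtain ⟨y, hy, rfl⟩ := hx
  obtain ⟨a, ha, hsum⟩ := hy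
  set CE := (eqvA A h).toContinuousLinearEquiv with hCE
  set B := (matR A)⁻¹ with hB
  set vR : Fin 2 → ℝ := fun i => (v i : ℝ) with hvR
  set c : ℕ → ℤ := fun n => Nat.casesOn n j a with hc
  set f : ℕ → E2 := fun i => toE ((B ^ (i + 1)).mulVec ((c i : ℝ) • vR)) with hf
  have hshift : HasSum (fun n => f (n + 1)) ((CE.symm : E2 →L[ℝ] E2) y) := by
    have h1 := (CE.symm : E2 →L[ℝ] E2).hasSum hsum
    convert h1 using 1
    funext n
    suffices hh : toE ((B ^ (n + 1 + 1)).mulVec ((a n : ℝ) • vR)) =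
      toE (B.mulVec ((B ^ (n + 1)).mulVec ((a n : ℝ) • vR))) by exact hh
    rw [Matrix.mulVec_mulVec, ← pow_succ']
  have hsumf : HasSum f ((CE.symm : E2 →L[ℝ] E2) y + f 0) := by
    have h2 := (hasSum_nat_add_iff (f := f) 1).mp hshift
    simpa [Finset.sum_range_one] using h2
  refine ⟨(CE.symm : E2 →L[ℝ] E2) y + f 0, ⟨c, ?_, hsumf⟩, ?_⟩
  · intro i
    cases i with
    | zero => exact hj
    | succ n => exact ha n
  · show CE ((CE.symm : E2 →L[ℝ] E2) y + f 0) = ((j : ℝ) • vecE v) +ᵥ y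
    rw [map_add]
    have h3 : CE ((CE.symm : E2 →L[ℝ] E2) y) = y := CE.apply_symm_apply y
    have h4 : CE (f 0) = (j : ℝ) • vecE v := by
      suffices hh : toE ((matR A).mulVec ((B ^ (0 + 1)).mulVec ((j : ℝ) • vR))) = (j : ℝ) • vecE v by exact hh
      rw [pow_one, hB, Matrix.mulVec_mulVec, Matrix.mul_nonsing_inv _ (isUnit_iff_ne_zero.mpr h),
        Matrix.one_mulVec]
      rfl
    rw [h3, h4, vadd_eq_add, add_comm]

/-- equation (3.3). If `ℤ²` is a tiling set for `T`, then
`A·(T°) ⊇ ⋃_{j=0}^{|q|-1} (T° + jv)`, and the sets `T° + jv`, `0 ≤ j ≤ |q|-1`,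
are pairwise disjoint. -/
theorem interior_subdivision
    (A : Matrix (Fin 2) (Fin 2) ℤ) (p q : ℤ) (v : Fin 2 → ℤ)
    (hq : 2 ≤ |q|)
    (hchar : A.charpoly = X ^ 2 + C p * X + C q)
    (hexp : Expanding A)
    (hbasis : IsZBasis A v)
    (hcover : (⋃ m : Fin 2 → ℤ, vecE m +ᵥ Tile A q v) = Set.univ)
    (hdisj : ∀ m m' : Fin 2 → ℤ, m ≠ m' →
      interior (vecE m +ᵥ Tile A q v) ∩ interior (vecE m' +ᵥ Tile A q v) = ∅) :
    (∀ j : ℤ, 0 ≤ j → j < |q| →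
      ((j : ℝ) • vecE v) +ᵥ interior (Tile A q v) ⊆
        (fun x : E2 => toE ((matR A).mulVec x)) '' interior (Tile A q v)) ∧
    (∀ j j' : ℤ, 0 ≤ j → j < |q| → 0 ≤ j' → j' < |q| → j ≠ j' →
      (((j : ℝ) • vecE v) +ᵥ interior (Tile A q v)) ∩
        (((j' : ℝ) • vecE v) +ᵥ interior (Tile A q v)) = ∅) := by
  have hdet := detR_ne_zero A p q hq hchar
  have hsm : ∀ k : ℤ, ((k : ℝ) • vecE v) = vecE (fun i => k * v i) := by
    intro k
    suffices hh : toE ((k : ℝ) • fun i => (v i : ℝ)) = toE (fun i => ((k * v i : ℤ) : ℝ)) by exact hh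
    congr 1
    funext i
    show (k : ℝ) * (v i : ℝ) = ((k * v i : ℤ) : ℝ)
    push_cast
    ring
  constructor
  · intro j hj0 hj1
    have hsub := tile_vadd_subset A q v hdet j ⟨hj0, hj1⟩
    have hmain : ((j : ℝ) • vecE v) +ᵥ interior (Tile A q v) ⊆
        ⇑(eqvA A hdet).toContinuousLinearEquiv.toHomeomorph '' interior (Tile A q v) := by
      calc ((j : ℝ) • vecE v) +ᵥ interior (Tile A q v)
          = interior (((j : ℝ) • vecE v) +ᵥ Tile A q v) := (interior_vadd _ _).symm
        _ ⊆ interior (⇑(eqvA A hdet).toContinuousLinearEquiv.toHomeomorph '' Tile A q v) :=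
            interior_mono hsub
        _ = ⇑(eqvA A hdet).toContinuousLinearEquiv.toHomeomorph '' interior (Tile A q v) :=
            ((eqvA A hdet).toContinuousLinearEquiv.toHomeomorph.image_interior _).symm
    exact fun x hx => by obtain ⟨y, hy, rfl⟩ := hmain hx; exact ⟨y, hy, rfl⟩
  · intro j j' hj0 hj1 hj'0 hj'1 hne
    have hv : v ≠ 0 := by
      have h0 := hbasis.2.ne_zero 0
      simpa using h0
    have hmm : (fun i => j * v i) ≠ (fun i => j' * v i) := by
      intro hEq
      obtain ⟨i, hi⟩ := Function.ne_iff.mp hv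
      have hvi : v i ≠ 0 := by simpa using hi
      exact hne (mul_right_cancel₀ hvi (congrFun hEq i))
    rw [hsm j, hsm j', ← interior_vadd, ← interior_vadd]
    exact hdisj _ _ hmm
end
end

section
/- Let A be a 2×2 expanding integer matrix that is a similarity (Aᵀ A = |q|·I₂) with characteristic polynomial f(x) = x² + px + q, |q| ≥ 2, and suppose 2|p| ≤ |q + 2|. Let v, v' ∈ ℤ² be such that {v, Av} is linearly independent and {v', Av'} is linearly independent, and let 𝒟 = Dv and 𝒟' = Dv' be the corresponding CC digit sets with D = {0, 1, …, |q|−1}. Then the boundaries of the two tiles have the same Hausdorff dimension: dim_H(∂T(A, 𝒟)) = dim_H(∂T(A, 𝒟')). -/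
noncomputable section

open Matrix Topology Set Pointwise Polynomial

/-! ### Auxiliary material -/

/-- View a point of the Euclidean plane as a plain vector. -/
def ofE (x : E2) : Fin 2 → ℝ := x

/-- Multiplication by a fixed matrix as a continuous linear map on `E2`. -/
def mulVecL (B : Matrix (Fin 2) (Fin 2) ℝ) : E2 →L[ℝ] E2 :=
  LinearMap.toContinuousLinearMap
    (((WithLp.linearEquiv 2 ℝ (Fin 2 → ℝ)).symm.toLinearMap) ∘ₗ
      B.mulVecLin ∘ₗ (WithLp.linearEquiv 2 ℝ (Fin 2 → ℝ)).toLinearMap)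

lemma mulVecL_apply (B : Matrix (Fin 2) (Fin 2) ℝ) (x : E2) :
    mulVecL B x = toE (B.mulVec (ofE x)) := by rfl

lemma castAv (A : Matrix (Fin 2) (Fin 2) ℤ) (v : Fin 2 → ℤ) :
    (fun i => ((A.mulVec v) i : ℝ)) = (matR A).mulVec (fun i => (v i : ℝ)) := by
  funext i
  simp [matR, Matrix.mulVec, dotProduct, Matrix.map_apply]

lemma mulVec_mem_tile (A : Matrix (Fin 2) (Fin 2) ℤ) (q : ℤ) (v v' : Fin 2 → ℤ)
    (B : Matrix (Fin 2) (Fin 2) ℝ)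
    (hcomm : ∀ n : ℕ, B * (matR A)⁻¹ ^ n = (matR A)⁻¹ ^ n * B)
    (hBv : B.mulVec (fun i => (v i : ℝ)) = fun i => (v' i : ℝ))
    {x : E2} (hx : x ∈ Tile A q v) : mulVecL B x ∈ Tile A q v' := by
  obtain ⟨a, ha, hsum⟩ := hx
  refine ⟨a, ha, ?_⟩
  have h2 := hsum.mapL (mulVecL B)
  have key : ∀ i : ℕ,
      mulVecL B (toE (((matR A)⁻¹ ^ (i + 1)).mulVec ((a i : ℝ) • fun j => (v j : ℝ))))
        = toE (((matR A)⁻¹ ^ (i + 1)).mulVec ((a i : ℝ) • fun j => (v' j : ℝ))) := by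
    intro i
    rw [mulVecL_apply]
    show toE (B.mulVec (((matR A)⁻¹ ^ (i + 1)).mulVec ((a i : ℝ) • fun j => (v j : ℝ)))) = _
    rw [Matrix.mulVec_mulVec, hcomm, ← Matrix.mulVec_mulVec, Matrix.mulVec_smul, hBv]
  unfold SumsTo
  simp only [← key]
  exact h2

/-- Corollary 3.8. For an expanding similarity `A` with
`2|p| ≤ |q+2|`, the Hausdorff dimension of `∂T(A, Dv)` does not depend on the choice
of the vector `v` (among those with `{v, Av}` linearly independent). -/
theorem dimH_frontier_independent_of_v
    (A : Matrix (Fin 2) (Fin 2) ℤ) (p q : ℤ) (v v' : Fin 2 → ℤ)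
    (hq : 2 ≤ |q|)
    (hchar : A.charpoly = X ^ 2 + C p * X + C q)
    (hexp : Expanding A)
    (hsim : Aᵀ * A = |q| • (1 : Matrix (Fin 2) (Fin 2) ℤ))
    (hpq : 2 * |p| ≤ |q + 2|)
    (hindep : LinearIndependent ℝ
      ![(fun i => (v i : ℝ)), (fun i => ((A.mulVec v) i : ℝ))])
    (hindep' : LinearIndependent ℝ
      ![(fun i => (v' i : ℝ)), (fun i => ((A.mulVec v') i : ℝ))]) :
    dimH (frontier (Tile A q v)) = dimH (frontier (Tile A q v')) := by
  classical
  set M : Matrix (Fin 2) (Fin 2) ℝ := matR A with hM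
  set vR : Fin 2 → ℝ := fun i => (v i : ℝ) with hvR
  set v'R : Fin 2 → ℝ := fun i => (v' i : ℝ) with hv'R
  -- determinant
  have hcoeff : (X ^ 2 + C p * X + C q).coeff 0 = q := by
    simp [coeff_add, coeff_X_pow, coeff_C]
  have hdA : A.det = q := by
    have h := Matrix.det_eq_sign_charpoly_coeff A
    rw [hchar, hcoeff] at h
    simpa using h
  have hdetM : M.det = (q : ℝ) := by
    have := (RingHom.map_det (Int.castRingHom ℝ) A).symm
    rw [hdA] at this
    simpa [hM, matR, RingHom.mapMatrix_apply] using this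
  have hq0 : (q : ℝ) ≠ 0 := by
    have : q ≠ 0 := by intro h; rw [h] at hq; norm_num at hq
    exact_mod_cast this
  have hMdet : IsUnit M.det := by rw [hdetM]; exact isUnit_iff_ne_zero.2 hq0
  -- Cayley–Hamilton
  have hCH : M * M = (-(p : ℝ)) • M - (q : ℝ) • 1 := by
    have hcp : M.charpoly = Polynomial.map (Int.castRingHom ℝ) A.charpoly := by
      rw [hM, matR, show (Int.cast : ℤ → ℝ) = ⇑(Int.castRingHom ℝ) from rfl,
        Matrix.charpoly_map]
    have hp1 : (p : Matrix (Fin 2) (Fin 2) ℝ) = (p : ℝ) • 1 := by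
      simp [Matrix.smul_one_eq_diagonal]
      rfl
    have hq1 : (q : Matrix (Fin 2) (Fin 2) ℝ) = (q : ℝ) • 1 := by
      simp [Matrix.smul_one_eq_diagonal]
      rfl
    have h : M ^ 2 + (p : ℝ) • M + (q : ℝ) • (1 : Matrix (Fin 2) (Fin 2) ℝ) = 0 := by
      have h0 := Matrix.aeval_self_charpoly M
      rw [hcp, hchar] at h0
      simp only [Polynomial.map_add, Polynomial.map_pow, Polynomial.map_mul, Polynomial.map_X,
        Polynomial.map_C, map_add, map_pow, _root_.map_mul, aeval_X, aeval_C, eq_intCast,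
        Polynomial.map_intCast, map_intCast] at h0
      rw [hp1, hq1, smul_mul_assoc, one_mul] at h0
      exact h0
    calc M * M = M ^ 2 + (p : ℝ) • M + (q : ℝ) • 1 + ((-(p : ℝ)) • M - (q : ℝ) • 1) := by
          rw [pow_two, neg_smul]; abel
    _ = (-(p : ℝ)) • M - (q : ℝ) • 1 := by rw [h]; abel
  have hvec : ∀ u : Fin 2 → ℝ, M.mulVec (M.mulVec u)
      = (-(p : ℝ)) • M.mulVec u - (q : ℝ) • u := by
    intro u
    rw [Matrix.mulVec_mulVec, hCH, Matrix.sub_mulVec, Matrix.smul_mulVec,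
      Matrix.smul_mulVec, Matrix.one_mulVec]
  -- bases and the intertwining equivalence
  have hfin : Fintype.card (Fin 2) = Module.finrank ℝ (Fin 2 → ℝ) := by
    simp [Module.finrank_fin_fun]
  let b : Module.Basis (Fin 2) ℝ (Fin 2 → ℝ) := basisOfLinearIndependentOfCardEqFinrank hindep hfin
  let b' : Module.Basis (Fin 2) ℝ (Fin 2 → ℝ) := basisOfLinearIndependentOfCardEqFinrank hindep' hfin
  have hb0 : b 0 = vR := by
    rw [show (b : Fin 2 → (Fin 2 → ℝ)) = ![vR, fun i => ((A.mulVec v) i : ℝ)] from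
      coe_basisOfLinearIndependentOfCardEqFinrank hindep hfin]
    rfl
  have hb1 : b 1 = M.mulVec vR := by
    rw [show (b : Fin 2 → (Fin 2 → ℝ)) = ![vR, fun i => ((A.mulVec v) i : ℝ)] from
      coe_basisOfLinearIndependentOfCardEqFinrank hindep hfin]
    show (fun i => ((A.mulVec v) i : ℝ)) = M.mulVec vR
    exact castAv A v
  have hb'0 : b' 0 = v'R := by
    rw [show (b' : Fin 2 → (Fin 2 → ℝ)) = ![v'R, fun i => ((A.mulVec v') i : ℝ)] from
      coe_basisOfLinearIndependentOfCardEqFinrank hindep' hfin]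
    rfl
  have hb'1 : b' 1 = M.mulVec v'R := by
    rw [show (b' : Fin 2 → (Fin 2 → ℝ)) = ![v'R, fun i => ((A.mulVec v') i : ℝ)] from
      coe_basisOfLinearIndependentOfCardEqFinrank hindep' hfin]
    show (fun i => ((A.mulVec v') i : ℝ)) = M.mulVec v'R
    exact castAv A v'
  let e : (Fin 2 → ℝ) ≃ₗ[ℝ] (Fin 2 → ℝ) := b.equiv b' (Equiv.refl _)
  have heb : ∀ i, e (b i) = b' i := fun i => b.equiv_apply i b' (Equiv.refl _)
  have hev : e vR = v'R := by rw [← hb0, ← hb'0]; exact heb 0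
  have heAv : e (M.mulVec vR) = M.mulVec v'R := by rw [← hb1, ← hb'1]; exact heb 1
  -- e intertwines with M
  have hLcomm : (e : (Fin 2 → ℝ) →ₗ[ℝ] (Fin 2 → ℝ)) ∘ₗ Matrix.toLin' M
      = Matrix.toLin' M ∘ₗ (e : (Fin 2 → ℝ) →ₗ[ℝ] (Fin 2 → ℝ)) := by
    apply b.ext
    intro i
    fin_cases i
    · simp only [LinearMap.comp_apply, Matrix.toLin'_apply, LinearEquiv.coe_coe]
      show e (M.mulVec (b 0)) = M.mulVec (e (b 0))
      rw [hb0, heAv, hev]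
    · simp only [LinearMap.comp_apply, Matrix.toLin'_apply, LinearEquiv.coe_coe]
      show e (M.mulVec (b 1)) = M.mulVec (e (b 1))
      rw [hb1, hvec vR, map_sub, _root_.map_smul, _root_.map_smul, hev, heAv, ← hvec v'R]
  -- the matrices of e and e.symm
  set B : Matrix (Fin 2) (Fin 2) ℝ := LinearMap.toMatrix' (e : (Fin 2 → ℝ) →ₗ[ℝ] _) with hB
  set B' : Matrix (Fin 2) (Fin 2) ℝ :=
    LinearMap.toMatrix' (e.symm : (Fin 2 → ℝ) →ₗ[ℝ] _) with hB'
  have hBapp : ∀ u : Fin 2 → ℝ, B.mulVec u = e u := by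
    intro u
    rw [← Matrix.toLin'_apply, hB, Matrix.toLin'_toMatrix']
    rfl
  have hB'app : ∀ u : Fin 2 → ℝ, B'.mulVec u = e.symm u := by
    intro u
    rw [← Matrix.toLin'_apply, hB', Matrix.toLin'_toMatrix']
    rfl
  have hBM : B * M = M * B := by
    have h1 : B * M = LinearMap.toMatrix'
        ((e : (Fin 2 → ℝ) →ₗ[ℝ] _) ∘ₗ Matrix.toLin' M) := by
      rw [LinearMap.toMatrix'_comp, LinearMap.toMatrix'_toLin']
    have h2 : M * B = LinearMap.toMatrix'
        (Matrix.toLin' M ∘ₗ (e : (Fin 2 → ℝ) →ₗ[ℝ] _)) := by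
      rw [LinearMap.toMatrix'_comp, LinearMap.toMatrix'_toLin']
    rw [h1, h2, hLcomm]
  have hBB' : B * B' = 1 := by
    rw [hB, hB', ← LinearMap.toMatrix'_comp]
    have : (e : (Fin 2 → ℝ) →ₗ[ℝ] _) ∘ₗ (e.symm : (Fin 2 → ℝ) →ₗ[ℝ] _) = LinearMap.id := by
      ext u; simp
    rw [this, LinearMap.toMatrix'_id]
  have hB'B : B' * B = 1 := by
    rw [hB, hB', ← LinearMap.toMatrix'_comp]
    have : (e.symm : (Fin 2 → ℝ) →ₗ[ℝ] _) ∘ₗ (e : (Fin 2 → ℝ) →ₗ[ℝ] _) = LinearMap.id := by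
      ext u; simp
    rw [this, LinearMap.toMatrix'_id]
  have hB'M : B' * M = M * B' := by
    calc B' * M = B' * M * (B * B') := by rw [hBB', Matrix.mul_one]
    _ = B' * (M * B) * B' := by simp only [Matrix.mul_assoc]
    _ = B' * (B * M) * B' := by rw [← hBM]
    _ = B' * B * (M * B') := by simp only [Matrix.mul_assoc]
    _ = M * B' := by rw [hB'B, Matrix.one_mul]
  -- commuting with powers of the inverse
  have hMM : M * M⁻¹ = 1 := Matrix.mul_nonsing_inv M hMdet
  have hM'M : M⁻¹ * M = 1 := Matrix.nonsing_inv_mul M hMdet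
  have hinv : ∀ C : Matrix (Fin 2) (Fin 2) ℝ, C * M = M * C →
      ∀ n : ℕ, C * M⁻¹ ^ n = M⁻¹ ^ n * C := by
    intro C hC n
    have h1 : C * M⁻¹ = M⁻¹ * C := by
      calc C * M⁻¹ = M⁻¹ * M * C * M⁻¹ := by rw [hM'M, Matrix.one_mul]
      _ = M⁻¹ * (M * C) * M⁻¹ := by simp only [Matrix.mul_assoc]
      _ = M⁻¹ * (C * M) * M⁻¹ := by rw [← hC]
      _ = M⁻¹ * C * (M * M⁻¹) := by simp only [Matrix.mul_assoc]
      _ = M⁻¹ * C := by rw [hMM, Matrix.mul_one]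
    exact ((Commute.pow_right h1 n)).eq
  -- transfer of tiles
  have hBv : B.mulVec vR = v'R := by rw [hBapp, hev]
  have hB'v' : B'.mulVec v'R = vR := by rw [hB'app, ← hev, e.symm_apply_apply]
  have hsub1 : ∀ x ∈ Tile A q v, mulVecL B x ∈ Tile A q v' :=
    fun x hx => mulVec_mem_tile A q v v' B (hinv B hBM) hBv hx
  have hsub2 : ∀ x ∈ Tile A q v', mulVecL B' x ∈ Tile A q v :=
    fun x hx => mulVec_mem_tile A q v' v B' (hinv B' hB'M) hB'v' hx
  -- the homeomorphism
  have hleft : ∀ x : E2, mulVecL B' (mulVecL B x) = x := by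
    intro x
    rw [mulVecL_apply, mulVecL_apply]
    show toE (B'.mulVec (B.mulVec (ofE x))) = x
    rw [Matrix.mulVec_mulVec, hB'B, Matrix.one_mulVec]
    rfl
  have hright : ∀ x : E2, mulVecL B (mulVecL B' x) = x := by
    intro x
    rw [mulVecL_apply, mulVecL_apply]
    show toE (B.mulVec (B'.mulVec (ofE x))) = x
    rw [Matrix.mulVec_mulVec, hBB', Matrix.one_mulVec]
    rfl
  let h : E2 ≃ₜ E2 :=
    { toFun := mulVecL B
      invFun := mulVecL B'
      left_inv := hleft
      right_inv := hright
      continuous_toFun := (mulVecL B).continuous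
      continuous_invFun := (mulVecL B').continuous }
  have htile : Tile A q v' = (mulVecL B) '' Tile A q v := by
    ext x
    constructor
    · intro hx
      exact ⟨mulVecL B' x, hsub2 x hx, hright x⟩
    · rintro ⟨y, hy, rfl⟩
      exact hsub1 y hy
  have hfr : frontier (Tile A q v') = (mulVecL B) '' frontier (Tile A q v) := by
    rw [htile]
    exact (h.image_frontier (Tile A q v)).symm
  -- Hausdorff dimension
  rw [hfr]
  apply le_antisymm
  · have hF : frontier (Tile A q v)
        = (mulVecL B') '' ((mulVecL B) '' frontier (Tile A q v)) := by
      rw [← Set.image_comp]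
      have : (⇑(mulVecL B') ∘ ⇑(mulVecL B)) = id := funext hleft
      rw [this, Set.image_id]
    calc dimH (frontier (Tile A q v))
        = dimH ((mulVecL B') '' ((mulVecL B) '' frontier (Tile A q v))) := by rw [← hF]
      _ ≤ dimH ((mulVecL B) '' frontier (Tile A q v)) :=
          (mulVecL B').lipschitz.dimH_image_le _
  · exact (mulVecL B).lipschitz.dimH_image_le _
end
end
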